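/- arXiv:1110.3664 — 3 statements merged into one kernel-verified Lean document; each statement's English description precedes it below -/
import Mathlib

section
/- In the de Rham cohomology of y^2 = P(x) with P(x) = 4(x-t1)^3 - t2(x-t1) - t3 over R = ℚ[t1,t2,t3,1/Δ], the class of x^3 dx/y equals (3t1^2 + (3/20)t2)·(x dx/y) + (-2t1^3 + (1/10)t1t2 + (1/10)t3)·(dx/y) modulo exact forms. -/
noncomputable section

/-- The discriminant `Δ = 27t3² - t2³` in `ℚ[t1,t2,t3]`. -/
def Δpoly : MvPolynomial (Fin 3) ℚ :=
  27 * MvPolynomial.X 2 ^ 2 - MvPolynomial.X 1 ^ 3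

/-- `R = ℚ[t1,t2,t3, 1/Δ]`, the localization of `ℚ[t1,t2,t3]` away from `Δ`. -/
def RR : Type := Localization.Away Δpoly

instance : CommRing RR := inferInstanceAs (CommRing (Localization.Away Δpoly))
instance : Algebra (MvPolynomial (Fin 3) ℚ) RR :=
  inferInstanceAs (Algebra (MvPolynomial (Fin 3) ℚ) (Localization.Away Δpoly))

/-- `t1, t2, t3` as elements of `R`. -/
def tv (i : Fin 3) : RR := algebraMap (MvPolynomial (Fin 3) ℚ) RR (MvPolynomial.X i)

/-- `P(x) = 4(x-t1)³ - t2(x-t1) - t3`, viewed in `R[x,y]`. -/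
def Ppoly : MvPolynomial (Fin 2) RR :=
  4 * (MvPolynomial.X 0 - MvPolynomial.C (tv 0)) ^ 3
    - MvPolynomial.C (tv 1) * (MvPolynomial.X 0 - MvPolynomial.C (tv 0))
    - MvPolynomial.C (tv 2)

/-- The coordinate ring `A = R[x,y]/(y² - P(x))` of the affine elliptic curve. -/
def AA : Type :=
  MvPolynomial (Fin 2) RR ⧸ Ideal.span {MvPolynomial.X 1 ^ 2 - Ppoly}

instance : CommRing AA :=
  inferInstanceAs (CommRing (MvPolynomial (Fin 2) RR ⧸ Ideal.span {MvPolynomial.X 1 ^ 2 - Ppoly}))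
instance : Algebra RR AA :=
  inferInstanceAs (Algebra RR (MvPolynomial (Fin 2) RR ⧸ Ideal.span {MvPolynomial.X 1 ^ 2 - Ppoly}))

/-- The class of `y` in `A`. -/
def ybar : AA :=
  Ideal.Quotient.mk (Ideal.span {MvPolynomial.X 1 ^ 2 - Ppoly}) (MvPolynomial.X 1)

/-- The class of `x` in `A`. -/
def xbar : AA :=
  Ideal.Quotient.mk (Ideal.span {MvPolynomial.X 1 ^ 2 - Ppoly}) (MvPolynomial.X 0)

/-- `A' = A[1/y]`, where the 1-forms `x^k dx/y` live. -/
def AA' : Type := Localization.Away ybar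

instance : CommRing AA' := inferInstanceAs (CommRing (Localization.Away ybar))
instance : Algebra AA AA' := inferInstanceAs (Algebra AA (Localization.Away ybar))
instance : IsLocalization.Away ybar AA' :=
  inferInstanceAs (IsLocalization.Away ybar (Localization.Away ybar))
instance : Algebra RR AA' := ((algebraMap AA AA').comp (algebraMap RR AA)).toAlgebra

/-- `x` as an element of `A'`. -/
def x' : AA' := algebraMap AA AA' xbar

/-- `1/y` as an element of `A'`. -/
def yinv : AA' := IsLocalization.Away.invSelf (S := AA') ybar

theorem hybar2 : ybar ^ 2 = Ideal.Quotient.mk (Ideal.span {MvPolynomial.X 1 ^ 2 - Ppoly}) Ppoly := by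
  show (Ideal.Quotient.mk (Ideal.span {MvPolynomial.X 1 ^ 2 - Ppoly}) (MvPolynomial.X 1) : MvPolynomial (Fin 2) RR ⧸ Ideal.span {MvPolynomial.X 1 ^ 2 - Ppoly}) ^ 2 = _
  exact (map_pow (Ideal.Quotient.mk (Ideal.span {MvPolynomial.X 1 ^ 2 - Ppoly})) (MvPolynomial.X 1) 2).symm.trans
    ((Ideal.Quotient.mk_eq_mk_iff_sub_mem _ _).mpr (Ideal.subset_span (Set.mem_singleton _)))

theorem hmkC (r : RR) : (Ideal.Quotient.mk (Ideal.span {MvPolynomial.X 1 ^ 2 - Ppoly}) (MvPolynomial.C r)) = algebraMap RR AA r := by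
  rfl

theorem phiP {S : Type*} [CommRing S] (φ : MvPolynomial (Fin 2) RR →+* S) :
    φ Ppoly = 4 * (φ (MvPolynomial.X 0) - φ (MvPolynomial.C (tv 0))) ^ 3
      - φ (MvPolynomial.C (tv 1)) * (φ (MvPolynomial.X 0) - φ (MvPolynomial.C (tv 0)))
      - φ (MvPolynomial.C (tv 2)) := by
  rw [Ppoly]
  simp only [map_sub, map_mul, map_pow, map_ofNat]

theorem hY2expand : (algebraMap AA AA' ybar)^2
    = 4 * (x' - algebraMap RR AA' (tv 0)) ^ 3
      - algebraMap RR AA' (tv 1) * (x' - algebraMap RR AA' (tv 0)) - algebraMap RR AA' (tv 2) := by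
  have h1 : (algebraMap AA AA' ybar)^2 = algebraMap AA AA' (ybar ^ 2) := (map_pow _ _ _).symm
  rw [h1, show (ybar ^ 2 : AA) = _ from hybar2]
  have h2 : Ideal.Quotient.mk (Ideal.span {MvPolynomial.X 1 ^ 2 - Ppoly}) Ppoly
      = 4 * (xbar - algebraMap RR AA (tv 0)) ^ 3
        - algebraMap RR AA (tv 1) * (xbar - algebraMap RR AA (tv 0)) - algebraMap RR AA (tv 2) := by
    rw [phiP, hmkC, hmkC, hmkC]
    rfl
  rw [show @Eq AA (Ideal.Quotient.mk (Ideal.span {MvPolynomial.X 1 ^ 2 - Ppoly}) Ppoly)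
      (4 * (xbar - algebraMap RR AA (tv 0)) ^ 3
        - algebraMap RR AA (tv 1) * (xbar - algebraMap RR AA (tv 0)) - algebraMap RR AA (tv 2)) from h2]
  have h3 : ∀ r : RR, algebraMap AA AA' (algebraMap RR AA r) = algebraMap RR AA' r := fun r => rfl
  simp only [map_sub, map_mul, map_pow, map_ofNat, h3]
  rfl


set_option maxHeartbeats 1000000 in
/-- In the de Rham cohomology of `y² = 4(x-t1)³ - t2(x-t1) - t3` over `R = ℚ[t1,t2,t3,1/Δ]`,
`x³dx/y = (3t1² + (3/20)t2)·(x dx/y) + (-2t1³ + (1/10)t1t2 + (1/10)t3)·(dx/y)`: concretely,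
the difference of the two sides of this relation is an exact relative 1-form `dg`. -/
theorem xcube_relation :
    ∃ g : AA',
      ((x' ^ 3
          - algebraMap RR AA' (3 * tv 0 ^ 2 +
              algebraMap (MvPolynomial (Fin 3) ℚ) RR (MvPolynomial.C (3 / 20 : ℚ)) * tv 1) * x'
          - algebraMap RR AA' (-(2 * tv 0 ^ 3) +
              algebraMap (MvPolynomial (Fin 3) ℚ) RR (MvPolynomial.C (1 / 10 : ℚ)) * tv 0 * tv 1 +
              algebraMap (MvPolynomial (Fin 3) ℚ) RR (MvPolynomial.C (1 / 10 : ℚ)) * tv 2))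
            * yinv) • (KaehlerDifferential.D RR AA' x') = KaehlerDifferential.D RR AA' g := by
  set T0 := algebraMap RR AA' (tv 0) with hT0
  set T1 := algebraMap RR AA' (tv 1) with hT1
  set T2 := algebraMap RR AA' (tv 2) with hT2
  set Y := algebraMap AA AA' ybar with hYdef
  set e := algebraMap RR AA' (algebraMap (MvPolynomial (Fin 3) ℚ) RR (MvPolynomial.C (1/20 : ℚ))) with he
  set d := KaehlerDifferential.D RR AA' with hd
  have hYinv : Y * yinv = 1 := IsLocalization.Away.mul_invSelf ybar
  have h20 : e * 20 = 1 := by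
    rw [he, show (20 : AA') = algebraMap RR AA'
        (algebraMap (MvPolynomial (Fin 3) ℚ) RR (MvPolynomial.C (20:ℚ))) by simp only [map_ofNat],
      ← map_mul, ← map_mul, ← map_mul, show ((1:ℚ)/20 * 20) = 1 by norm_num]
    simp only [map_one]
  have hq320 : algebraMap RR AA' (algebraMap (MvPolynomial (Fin 3) ℚ) RR
      (MvPolynomial.C (3/20 : ℚ))) = 3 * e := by
    rw [show (3/20 : ℚ) = 3 * (1/20) by norm_num, map_mul, map_mul, map_mul,
      map_ofNat, map_ofNat, map_ofNat, ← he]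
  have hq110 : algebraMap RR AA' (algebraMap (MvPolynomial (Fin 3) ℚ) RR
      (MvPolynomial.C (1/10 : ℚ))) = 2 * e := by
    rw [show (1/10 : ℚ) = 2 * (1/20) by norm_num, map_mul, map_mul, map_mul,
      map_ofNat, map_ofNat, map_ofNat, ← he]
  have hY2 : Y ^ 2 = 4 * (x' - T0) ^ 3 - T1 * (x' - T0) - T2 := hY2expand
  have hdT0 : d T0 = 0 := Derivation.map_algebraMap d _
  have hdT1 : d T1 = 0 := Derivation.map_algebraMap d _
  have hdT2 : d T2 = 0 := Derivation.map_algebraMap d _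
  have hde : d e = 0 := Derivation.map_algebraMap d _
  have hdY2 : (2 * Y) • d Y = (12 * (x' - T0) ^ 2 - T1) • d x' := by
    have h1 : d (Y ^ 2) = (2 * Y) • d Y := by
      rw [Derivation.leibniz_pow, pow_one]
      module
    have h2 : d (4 * (x' - T0) ^ 3 - T1 * (x' - T0) - T2)
        = (12 * (x' - T0) ^ 2 - T1) • d x' := by
      have h4 : d (4 : AA') = 0 := by
        rw [show (4 : AA') = ((4 : ℕ) : AA') by norm_cast]
        exact Derivation.map_natCast d 4
      simp only [Derivation.map_sub, Derivation.leibniz, Derivation.leibniz_pow,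
        hdT0, hdT1, hdT2, h4]
      module
    rw [← h1, hY2, h2]
  have hu : (10 * e * yinv) * (2 * Y) = 1 := by
    linear_combination 20 * e * hYinv + h20
  have hdY : d Y = (10 * e * yinv * (12 * (x' - T0) ^ 2 - T1)) • d x' := by
    calc d Y = ((10 * e * yinv) * (2 * Y)) • d Y := by rw [hu, one_smul]
    _ = (10 * e * yinv) • ((2 * Y) • d Y) := by rw [mul_smul]
    _ = (10 * e * yinv) • ((12 * (x' - T0) ^ 2 - T1) • d x') := by rw [hdY2]
    _ = _ := by rw [smul_smul]
  refine ⟨(2 * e * x' + 8 * e * T0) * Y, ?_⟩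
  have hdc : d (2 * e * x' + 8 * e * T0) = (2 * e) • d x' := by
    simp only [Derivation.map_add, Derivation.leibniz, hde, hdT0]
    have h2' : d (2 : AA') = 0 := by
      rw [show (2 : AA') = ((2 : ℕ) : AA') by norm_cast]
      exact Derivation.map_natCast d 2
    have h8 : d (8 : AA') = 0 := by
      rw [show (8 : AA') = ((8 : ℕ) : AA') by norm_cast]
      exact Derivation.map_natCast d 8
    simp only [Derivation.leibniz, h2', h8, hde]
    module
  have hdg : d ((2 * e * x' + 8 * e * T0) * Y)
      = ((2 * e * x' + 8 * e * T0) * (10 * e * yinv * (12 * (x' - T0) ^ 2 - T1))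
          + Y * (2 * e)) • d x' := by
    rw [Derivation.leibniz, hdY, hdc, smul_smul, smul_smul, ← add_smul]
  rw [hdg]
  refine congrArg (fun c => c • d x') ?_
  simp only [map_add, map_mul, map_pow, map_neg, map_ofNat, hq320, hq110, ← hT0, ← hT1, ← hT2]
  have hunit : IsUnit Y := IsUnit.of_mul_eq_one yinv hYinv
  refine hunit.mul_left_cancel ?_
  linear_combination
    ((x' ^ 3 - (3 * T0 ^ 2 + 3 * e * T1) * x' - (-(2 * T0 ^ 3) + 2 * e * T0 * T1 + 2 * e * T2))
        - 20 * e ^ 2 * ((x' + 4 * T0) * (12 * (x' - T0) ^ 2 - T1))) * hYinv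
      + (-(2 * e)) * hY2
      + (-(x' ^ 3 - 3 * T0 ^ 2 * x' + 2 * T0 ^ 3)
          - (x' + 4 * T0) * (12 * (x' - T0) ^ 2 - T1) * e) * h20

end
end

section
/- Let g(z) be a local holomorphic solution on ℍ to the Ramanujan system g1' = g1^2 - g2/12, g2' = 4g1g2 - 6g3, g3' = 6g1g3 - g2^2/3, and suppose g1, g2, g3 also satisfy the functional equations (cz+d)^{-4}g2((az+b)/(cz+d)) = g2(z) and (cz+d)^{-6}g3((az+b)/(cz+d)) = g3(z) and (cz+d)^{-2}g1((az+b)/(cz+d)) = g1(z) + c(cz+d)^{-1} for a single fixed A = [[a,b],[c,d]] ∈ SL(2,ℝ). Then the functions φ1(z) = (cz+d)^{-2}g1(Az) - c(cz+d)^{-1}, φ2(z) = (cz+d)^{-4}g2(Az), φ3(z) = (cz+d)^{-6}g3(Az) also satisfy the Ramanujan system (this holds for arbitrary A ∈ SL(2,ℂ) and arbitrary solutions g). -/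
set_option maxHeartbeats 1000000


/-- If `(g1,g2,g3)` is a holomorphic solution of the Ramanujan system on an open set `U`, and
`A = [[a,b],[c,d]] ∈ SL(2,ℂ)`, then `φ1 = (cz+d)⁻²g1(Az) - c(cz+d)⁻¹`, `φ2 = (cz+d)⁻⁴g2(Az)`,
`φ3 = (cz+d)⁻⁶g3(Az)` is again a solution of the Ramanujan system (where `cz+d ≠ 0` and
`Az = (az+b)/(cz+d) ∈ U`). -/
theorem ramanujan_sl2_invariance (a b c d : ℂ) (hdet : a * d - b * c = 1)
    (U : Set ℂ) (hU : IsOpen U) (g1 g2 g3 : ℂ → ℂ)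
    (h1 : ∀ w ∈ U, HasDerivAt g1 ((g1 w) ^ 2 - g2 w / 12) w)
    (h2 : ∀ w ∈ U, HasDerivAt g2 (4 * g1 w * g2 w - 6 * g3 w) w)
    (h3 : ∀ w ∈ U, HasDerivAt g3 (6 * g1 w * g3 w - (g2 w) ^ 2 / 3) w)
    (z : ℂ) (hz : c * z + d ≠ 0) (hzU : (a * z + b) / (c * z + d) ∈ U) :
    HasDerivAt (fun w => ((c * w + d) ^ 2)⁻¹ * g1 ((a * w + b) / (c * w + d))
        - c * (c * w + d)⁻¹)
      ((((c * z + d) ^ 2)⁻¹ * g1 ((a * z + b) / (c * z + d)) - c * (c * z + d)⁻¹) ^ 2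
        - (((c * z + d) ^ 4)⁻¹ * g2 ((a * z + b) / (c * z + d))) / 12) z ∧
    HasDerivAt (fun w => ((c * w + d) ^ 4)⁻¹ * g2 ((a * w + b) / (c * w + d)))
      (4 * (((c * z + d) ^ 2)⁻¹ * g1 ((a * z + b) / (c * z + d)) - c * (c * z + d)⁻¹)
          * (((c * z + d) ^ 4)⁻¹ * g2 ((a * z + b) / (c * z + d)))
        - 6 * (((c * z + d) ^ 6)⁻¹ * g3 ((a * z + b) / (c * z + d)))) z ∧
    HasDerivAt (fun w => ((c * w + d) ^ 6)⁻¹ * g3 ((a * w + b) / (c * w + d)))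
      (6 * (((c * z + d) ^ 2)⁻¹ * g1 ((a * z + b) / (c * z + d)) - c * (c * z + d)⁻¹)
          * (((c * z + d) ^ 6)⁻¹ * g3 ((a * z + b) / (c * z + d)))
        - (((c * z + d) ^ 4)⁻¹ * g2 ((a * z + b) / (c * z + d))) ^ 2 / 3) z := by
  have hden : HasDerivAt (fun w => c * w + d) c z := by
    simpa using ((hasDerivAt_id z).const_mul c).add_const d
  have hnum : HasDerivAt (fun w => a * w + b) a z := by
    simpa using ((hasDerivAt_id z).const_mul a).add_const b
  have hMob : HasDerivAt (fun w => (a * w + b) / (c * w + d)) (((c * z + d) ^ 2)⁻¹) z := by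
    have key : a * (c * z + d) - (a * z + b) * c = 1 := by linear_combination hdet
    simpa [key, one_div, Pi.div_def] using hnum.div hden hz
  have hpow : ∀ n : ℕ, HasDerivAt (fun w => ((c * w + d) ^ n)⁻¹)
      (-(n * (c * z + d) ^ (n - 1) * c) / ((c * z + d) ^ n) ^ 2) z := fun n =>
    (hden.pow n).inv (pow_ne_zero n hz)
  have comp : ∀ (g : ℂ → ℂ) (g' : ℂ),
      HasDerivAt g g' ((a * z + b) / (c * z + d)) →
      HasDerivAt (fun w => g ((a * w + b) / (c * w + d))) (g' * ((c * z + d) ^ 2)⁻¹) z := by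
    intro g g' hg
    simpa [Function.comp_def] using hg.comp z hMob
  have hG1 := comp g1 _ (h1 _ hzU)
  have hG2 := comp g2 _ (h2 _ hzU)
  have hG3 := comp g3 _ (h3 _ hzU)
  refine ⟨?_, ?_, ?_⟩
  · refine (((hpow 2).mul hG1).sub ((hden.inv hz).const_mul c)).congr_deriv ?_
    symm
    set q := c * z + d with hq
    set G1 := g1 ((a * z + b) / q) with hGe1
    set G2 := g2 ((a * z + b) / q) with hGe2
    clear_value q G1 G2
    push_cast
    field_simp
    ring_nf
  · refine ((hpow 4).mul hG2).congr_deriv ?_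
    symm
    set q := c * z + d with hq
    set G1 := g1 ((a * z + b) / q) with hGe1
    set G2 := g2 ((a * z + b) / q) with hGe2
    set G3 := g3 ((a * z + b) / q) with hGe3
    clear_value q G1 G2 G3
    push_cast
    field_simp
    ring_nf
  · refine ((hpow 6).mul hG3).congr_deriv ?_
    symm
    set q := c * z + d with hq
    set G1 := g1 ((a * z + b) / q) with hGe1
    set G2 := g2 ((a * z + b) / q) with hGe2
    set G3 := g3 ((a * z + b) / q) with hGe3
    clear_value q G1 G2 G3
    push_cast
    field_simp
    ring
end

section
/- If u1, u2, u3 are differentiable functions satisfying the Halphen system u_i' = u_i(u_j + u_k) - u_j u_k (for {i,j,k} = {1,2,3}), and A = [[a,b],[c,d]] ∈ SL(2,ℂ), then v_i(z) := (cz+d)^{-2}u_i((az+b)/(cz+d)) - c(cz+d)^{-1}, i = 1,2,3, also satisfy the Halphen system on the domain where cz+d ≠ 0. -/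
lemma halphen_aux (a b c d z U' : ℂ) (hdet : a * d - b * c = 1)
    (hz : c * z + d ≠ 0) (u : ℂ → ℂ)
    (hu : HasDerivAt u U' ((a * z + b) / (c * z + d))) :
    HasDerivAt (fun w => ((c * w + d) ^ 2)⁻¹ * u ((a * w + b) / (c * w + d))
        - c * (c * w + d)⁻¹)
      (-(2 * c * ((c * z + d) ^ 3)⁻¹) * u ((a * z + b) / (c * z + d))
        + ((c * z + d) ^ 2)⁻¹ * (U' * ((c * z + d) ^ 2)⁻¹)
        + c * (c * ((c * z + d) ^ 2)⁻¹)) z := by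
  have hlin : HasDerivAt (fun w : ℂ => c * w + d) c z := by
    simpa using ((hasDerivAt_id z).const_mul c).add_const d
  have hnum : HasDerivAt (fun w : ℂ => a * w + b) a z := by
    simpa using ((hasDerivAt_id z).const_mul a).add_const b
  have hmob : HasDerivAt (fun w => (a * w + b) / (c * w + d)) (((c * z + d) ^ 2)⁻¹) z := by
    have := hnum.div hlin hz
    refine this.congr_deriv ?_
    have h1 : a * (c * z + d) - (a * z + b) * c = 1 := by linear_combination hdet
    rw [h1]
    field_simp
  have hcomp : HasDerivAt (fun w => u ((a * w + b) / (c * w + d)))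
      (U' * ((c * z + d) ^ 2)⁻¹) z := hu.comp z hmob
  have hsq : HasDerivAt (fun w : ℂ => (c * w + d) ^ 2) (2 * (c * z + d) * c) z := by
    exact (hlin.pow 2).congr_deriv (by norm_num)
  have hinv : HasDerivAt (fun w : ℂ => ((c * w + d) ^ 2)⁻¹)
      (-(2 * c * ((c * z + d) ^ 3)⁻¹)) z := by
    have := hsq.inv (pow_ne_zero 2 hz)
    refine this.congr_deriv ?_
    field_simp
  have hcinv : HasDerivAt (fun w : ℂ => c * (c * w + d)⁻¹) (c * (-(c * ((c * z + d) ^ 2)⁻¹))) z := by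
    have := (hlin.inv hz).const_mul c
    refine this.congr_deriv ?_
    field_simp
  have := (hinv.mul hcomp).sub hcinv
  refine this.congr_deriv ?_
  ring



/-- If `(u1,u2,u3)` is a holomorphic solution of the Halphen system on an open set `U`, and
`A = [[a,b],[c,d]] ∈ SL(2,ℂ)`, then `v_i(z) = (cz+d)⁻²u_i(Az) - c(cz+d)⁻¹`, `i = 1,2,3`, also
satisfy the Halphen system on the domain where `cz+d ≠ 0` (and `Az = (az+b)/(cz+d) ∈ U`). -/
theorem halphen_sl2_invariance (a b c d : ℂ) (hdet : a * d - b * c = 1)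
    (U : Set ℂ) (hU : IsOpen U) (u1 u2 u3 : ℂ → ℂ)
    (h1 : ∀ w ∈ U, HasDerivAt u1 (u1 w * (u2 w + u3 w) - u2 w * u3 w) w)
    (h2 : ∀ w ∈ U, HasDerivAt u2 (u2 w * (u1 w + u3 w) - u1 w * u3 w) w)
    (h3 : ∀ w ∈ U, HasDerivAt u3 (u3 w * (u1 w + u2 w) - u1 w * u2 w) w)
    (z : ℂ) (hz : c * z + d ≠ 0) (hzU : (a * z + b) / (c * z + d) ∈ U) :
    HasDerivAt (fun w => ((c * w + d) ^ 2)⁻¹ * u1 ((a * w + b) / (c * w + d))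
        - c * (c * w + d)⁻¹)
      ((((c * z + d) ^ 2)⁻¹ * u1 ((a * z + b) / (c * z + d)) - c * (c * z + d)⁻¹)
          * ((((c * z + d) ^ 2)⁻¹ * u2 ((a * z + b) / (c * z + d)) - c * (c * z + d)⁻¹)
            + (((c * z + d) ^ 2)⁻¹ * u3 ((a * z + b) / (c * z + d)) - c * (c * z + d)⁻¹))
        - (((c * z + d) ^ 2)⁻¹ * u2 ((a * z + b) / (c * z + d)) - c * (c * z + d)⁻¹)
          * (((c * z + d) ^ 2)⁻¹ * u3 ((a * z + b) / (c * z + d)) - c * (c * z + d)⁻¹)) z ∧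
    HasDerivAt (fun w => ((c * w + d) ^ 2)⁻¹ * u2 ((a * w + b) / (c * w + d))
        - c * (c * w + d)⁻¹)
      ((((c * z + d) ^ 2)⁻¹ * u2 ((a * z + b) / (c * z + d)) - c * (c * z + d)⁻¹)
          * ((((c * z + d) ^ 2)⁻¹ * u1 ((a * z + b) / (c * z + d)) - c * (c * z + d)⁻¹)
            + (((c * z + d) ^ 2)⁻¹ * u3 ((a * z + b) / (c * z + d)) - c * (c * z + d)⁻¹))
        - (((c * z + d) ^ 2)⁻¹ * u1 ((a * z + b) / (c * z + d)) - c * (c * z + d)⁻¹)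
          * (((c * z + d) ^ 2)⁻¹ * u3 ((a * z + b) / (c * z + d)) - c * (c * z + d)⁻¹)) z ∧
    HasDerivAt (fun w => ((c * w + d) ^ 2)⁻¹ * u3 ((a * w + b) / (c * w + d))
        - c * (c * w + d)⁻¹)
      ((((c * z + d) ^ 2)⁻¹ * u3 ((a * z + b) / (c * z + d)) - c * (c * z + d)⁻¹)
          * ((((c * z + d) ^ 2)⁻¹ * u1 ((a * z + b) / (c * z + d)) - c * (c * z + d)⁻¹)
            + (((c * z + d) ^ 2)⁻¹ * u2 ((a * z + b) / (c * z + d)) - c * (c * z + d)⁻¹))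
        - (((c * z + d) ^ 2)⁻¹ * u1 ((a * z + b) / (c * z + d)) - c * (c * z + d)⁻¹)
          * (((c * z + d) ^ 2)⁻¹ * u2 ((a * z + b) / (c * z + d)) - c * (c * z + d)⁻¹)) z := by
  set w0 := (a * z + b) / (c * z + d)
  refine ⟨?_, ?_, ?_⟩
  · have := halphen_aux a b c d z _ hdet hz u1 (h1 w0 hzU)
    convert this using 1
    simp only [← inv_pow]
    ring
  · have := halphen_aux a b c d z _ hdet hz u2 (h2 w0 hzU)
    convert this using 1
    simp only [← inv_pow]
    ring
  · have := halphen_aux a b c d z _ hdet hz u3 (h3 w0 hzU)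
    convert this using 1
    simp only [← inv_pow]
    ring
end
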